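/- Let C ⊆ F_q^n be a k-dimensional F_q-linear code (1 ≤ k < n), let K be a finite field of characteristic p with q^k elements, let κ : K → Hom_{F_p}(C,F_p) be an F_p-linear isomorphism, write f_λ = κ(λ), and let D = {(λ,…,λ) : λ ∈ K} ⊆ K^m be the repetition code with m ≥ 2. Then: (i) ⋂_{Λ∈D} ker(F_Λ) = {(c_1,…,c_m) ∈ C^m : c_1 + ⋯ + c_m = 0}; and (ii) with S̄ = {(c_1,…,c_m | d_1,…,d_m) : Σ_i c_i = 0, c_i ∈ C, d_i ∈ C^⊥}, one has min{swt(w) : w ∈ S̄^{⊥s} ∖ S̄} = min{d(C), m}. -/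

import Mathlib

open Matrix

attribute [local instance] Classical.propDecidable

private lemma trace_nondeg (p : ℕ) [Fact p.Prime] (F : Type) [Field F] [Fintype F]
    [Algebra (ZMod p) F] (x : F) (h : ∀ α : F, Algebra.trace (ZMod p) F (α * x) = 0) :
    x = 0 := by
  by_contra hx
  have : FiniteDimensional (ZMod p) F := Module.Finite.of_finite
  apply Algebra.trace_ne_zero (ZMod p) F
  ext y
  have := h (y * x⁻¹)
  rwa [mul_assoc, inv_mul_cancel₀ hx, mul_one] at this

private noncomputable def dotForm (F : Type) [Field F] (n : ℕ) :
    LinearMap.BilinForm F (Fin n → F) :=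
  LinearMap.mk₂ F (fun x y => x ⬝ᵥ y) (fun a b c => add_dotProduct a b c)
    (fun a b c => smul_dotProduct a b c) (fun a b c => dotProduct_add a b c)
    (fun a b c => dotProduct_smul a b c)

private lemma dotForm_apply (F : Type) [Field F] (n : ℕ) (x y : Fin n → F) :
    dotForm F n x y = x ⬝ᵥ y := rfl

private lemma mem_of_dual_dual (F : Type) [Field F] (n : ℕ) (C : Submodule F (Fin n → F))
    (u : Fin n → F) (h : ∀ d : Fin n → F, (∀ y ∈ C, d ⬝ᵥ y = 0) → d ⬝ᵥ u = 0) : u ∈ C := by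
  have hnd : (dotForm F n).Nondegenerate := by
    constructor <;> intro x hx <;> ext j <;> have := hx (Pi.single j 1) <;>
    simpa [dotForm_apply, dotProduct_single, single_dotProduct] using this
  have hrefl : (dotForm F n).IsRefl := by
    intro x y hxy
    rw [dotForm_apply] at hxy ⊢
    rwa [dotProduct_comm]
  have key := LinearMap.BilinForm.orthogonal_orthogonal hnd hrefl C
  rw [← key]
  rw [LinearMap.BilinForm.mem_orthogonal_iff]
  intro d hd
  have hd' : ∀ y ∈ C, d ⬝ᵥ y = 0 := by
    intro y hy
    have := hd y hy
    rw [dotForm_apply] at this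
    rwa [dotProduct_comm]
  exact h d hd'

private lemma card_prod_filter {α β : Type*} [Fintype α] [Fintype β]
    (P : α → Prop) (Q : β → Prop) [DecidablePred P] [DecidablePred Q] :
    (Finset.univ.filter (fun ij : α × β => P ij.1 ∧ Q ij.2)).card
      = (Finset.univ.filter P).card * (Finset.univ.filter Q).card := by
  rw [← Finset.univ_product_univ, Finset.filter_product, Finset.card_product]

/-- for the repetition code `D = {(λ,…,λ)} ⊆ K^m`:
(i) `⋂_{Λ∈D} ker F_Λ = {(c_1,…,c_m) ∈ C^m : Σ c_i = 0}`, and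
(ii) the minimum symplectic weight over `S̄^{⊥s} ∖ S̄` equals `min{d(C), m}`. -/
theorem stmt_12 (p r n k m : ℕ) [Fact p.Prime] (hr : 0 < r) (hk1 : 1 ≤ k) (hkn : k < n)
    (hm : 2 ≤ m)
    (F K : Type) [Field F] [Fintype F] [Algebra (ZMod p) F] (hF : Fintype.card F = p ^ r)
    [Field K] [Fintype K] [Algebra (ZMod p) K] (hK : Fintype.card K = (p ^ r) ^ k)
    (C : Submodule F (Fin n → F)) (hC : Module.finrank F C = k)
    (κ : K ≃ₗ[ZMod p] (↥C →ₗ[ZMod p] ZMod p)) :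
    ({c : Fin m → ↥C | ∀ Λ : Fin m → K, (∃ lam : K, Λ = fun _ => lam) →
        ∑ i : Fin m, κ (Λ i) (c i) = 0}
      = {c : Fin m → ↥C | ∑ i : Fin m, (c i : Fin n → F) = 0})
    ∧ sInf {w : ℕ | ∃ uv : (Fin m → Fin n → F) × (Fin m → Fin n → F),
        (∀ cd : (Fin m → Fin n → F) × (Fin m → Fin n → F),
          ((∀ i : Fin m, cd.1 i ∈ C) ∧ (∑ i : Fin m, cd.1 i = 0)
            ∧ (∀ i : Fin m, ∀ y ∈ C, cd.2 i ⬝ᵥ y = 0)) →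
          Algebra.trace (ZMod p) F
            ((∑ i : Fin m, cd.2 i ⬝ᵥ uv.1 i) - ∑ i : Fin m, uv.2 i ⬝ᵥ cd.1 i) = 0)
        ∧ ¬((∀ i : Fin m, uv.1 i ∈ C) ∧ (∑ i : Fin m, uv.1 i = 0)
            ∧ (∀ i : Fin m, ∀ y ∈ C, uv.2 i ⬝ᵥ y = 0))
        ∧ w = (Finset.univ.filter
            (fun ij : Fin m × Fin n => uv.1 ij.1 ij.2 ≠ 0 ∨ uv.2 ij.1 ij.2 ≠ 0)).card}
      = min (sInf {w : ℕ | ∃ c ∈ C, c ≠ 0 ∧ w = hammingNorm c}) m := by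
  constructor
  · -- Part (i)
    ext c
    simp only [Set.mem_setOf_eq]
    constructor
    · intro h
      have h2 : ∀ lam : K, κ lam (∑ i, c i) = 0 := by
        intro lam
        have := h (fun _ => lam) ⟨lam, rfl⟩
        rw [map_sum]
        simpa using this
      have h3 : (∑ i, c i) = (0 : ↥C) := by
        rw [← Module.forall_dual_apply_eq_zero_iff (ZMod p)]
        intro φ
        have := h2 (κ.symm φ)
        rwa [κ.apply_symm_apply] at this
      have : ((∑ i, c i : ↥C) : Fin n → F) = 0 := by rw [h3]; rfl
      rwa [AddSubmonoidClass.coe_finset_sum] at this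
    · intro h Λ hΛ
      obtain ⟨lam, hΛ⟩ := hΛ
      subst hΛ
      have hsum : (∑ i, c i) = (0 : ↥C) := by
        apply Subtype.ext
        rw [AddSubmonoidClass.coe_finset_sum]
        exact h
      calc ∑ i : Fin m, κ lam (c i) = κ lam (∑ i, c i) := (map_sum (κ lam) _ _).symm
        _ = 0 := by rw [hsum, map_zero]
  · -- Part (ii)
    have tnd : ∀ x : F, (∀ α : F, Algebra.trace (ZMod p) F (α * x) = 0) → x = 0 :=
      trace_nondeg p F
    set T := {w : ℕ | ∃ uv : (Fin m → Fin n → F) × (Fin m → Fin n → F),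
        (∀ cd : (Fin m → Fin n → F) × (Fin m → Fin n → F),
          ((∀ i : Fin m, cd.1 i ∈ C) ∧ (∑ i : Fin m, cd.1 i = 0)
            ∧ (∀ i : Fin m, ∀ y ∈ C, cd.2 i ⬝ᵥ y = 0)) →
          Algebra.trace (ZMod p) F
            ((∑ i : Fin m, cd.2 i ⬝ᵥ uv.1 i) - ∑ i : Fin m, uv.2 i ⬝ᵥ cd.1 i) = 0)
        ∧ ¬((∀ i : Fin m, uv.1 i ∈ C) ∧ (∑ i : Fin m, uv.1 i = 0)
            ∧ (∀ i : Fin m, ∀ y ∈ C, uv.2 i ⬝ᵥ y = 0))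
        ∧ w = (Finset.univ.filter
            (fun ij : Fin m × Fin n => uv.1 ij.1 ij.2 ≠ 0 ∨ uv.2 ij.1 ij.2 ≠ 0)).card} with hT
    set dS := {w : ℕ | ∃ c ∈ C, c ≠ 0 ∧ w = hammingNorm c} with hdS
    haveI : NeZero m := ⟨by omega⟩
    haveI : Nonempty (Fin m) := ⟨⟨0, by omega⟩⟩
    -- C is nonzero
    have hCne : ∃ c₀ : Fin n → F, c₀ ∈ C ∧ c₀ ≠ 0 := by
      by_contra hc
      push_neg at hc
      have : C = ⊥ := by
        rw [Submodule.eq_bot_iff]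
        intro x hx
        exact hc x hx
      rw [this, finrank_bot] at hC
      omega
    have hdSne : dS.Nonempty := by
      obtain ⟨c₀, hc₀, hc₀ne⟩ := hCne
      exact ⟨hammingNorm c₀, c₀, hc₀, hc₀ne, rfl⟩
    obtain ⟨c₀, hc₀C, hc₀ne, hc₀w⟩ := Nat.sInf_mem hdSne
    -- a coordinate where c₀ is nonzero
    have hj₀ : ∃ j₀ : Fin n, c₀ j₀ ≠ 0 := by
      by_contra hj
      push_neg at hj
      exact hc₀ne (funext hj)
    obtain ⟨j₀, hj₀⟩ := hj₀
    -- dC ∈ T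
    have hdCT : sInf dS ∈ T := by
      refine ⟨(fun i => if i = (0 : Fin m) then c₀ else 0, 0), ?_, ?_, ?_⟩
      · rintro cd ⟨hcd1, hcd2, hcd3⟩
        have h1 : ∑ i : Fin m, cd.2 i ⬝ᵥ (if i = (0 : Fin m) then c₀ else 0) = 0 := by
          rw [Finset.sum_eq_single (0 : Fin m)]
          · simp [hcd3 0 c₀ hc₀C]
          · intro b _ hb; simp [hb]
          · simp
        have h2 : ∑ i : Fin m, (0 : Fin m → Fin n → F) i ⬝ᵥ cd.1 i = 0 := by
          simp [zero_dotProduct]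
        rw [h1, h2, sub_zero, map_zero]
      · rintro ⟨_, hsum, _⟩
        apply hc₀ne
        rw [← hsum, Finset.sum_ite_eq' Finset.univ (0 : Fin m) (fun _ => c₀)]
        simp
      · have : (Finset.univ.filter
            (fun ij : Fin m × Fin n =>
              (if ij.1 = (0 : Fin m) then c₀ else 0) ij.2 ≠ 0 ∨ (0:Fin m → Fin n → F) ij.1 ij.2 ≠ 0)).card
            = (Finset.univ.filter
              (fun ij : Fin m × Fin n => ij.1 = (0 : Fin m) ∧ c₀ ij.2 ≠ 0)).card := by
          apply congrArg
          apply Finset.filter_congr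
          intro ij _
          by_cases hij : ij.1 = (0 : Fin m) <;> simp [hij]
        rw [this, card_prod_filter (fun i : Fin m => i = (0 : Fin m)) (fun j : Fin n => c₀ j ≠ 0),
          Finset.filter_eq' Finset.univ (0 : Fin m)]
        simp [hc₀w, hammingNorm]
    -- m ∈ T
    have hmT : (m : ℕ) ∈ T := by
      refine ⟨(0, fun _ => Pi.single j₀ (1 : F)), ?_, ?_, ?_⟩
      · rintro cd ⟨hcd1, hcd2, hcd3⟩
        have h1 : ∑ i : Fin m, cd.2 i ⬝ᵥ (0 : Fin m → Fin n → F) i = 0 := by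
          simp [dotProduct_zero]
        have h2 : ∑ i : Fin m, Pi.single j₀ (1 : F) ⬝ᵥ cd.1 i = 0 := by
          have : ∑ i : Fin m, Pi.single j₀ (1 : F) ⬝ᵥ cd.1 i
              = Pi.single j₀ (1 : F) ⬝ᵥ ∑ i : Fin m, cd.1 i := by
            simp only [dotProduct, Finset.sum_apply, Finset.mul_sum]
            rw [Finset.sum_comm]
          rw [this, hcd2, dotProduct_zero]
        rw [h1, h2, sub_zero, map_zero]
      · rintro ⟨_, _, h3⟩
        have := h3 0 c₀ hc₀C
        rw [single_dotProduct, one_mul] at this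
        exact hj₀ this
      · have : (Finset.univ.filter
            (fun ij : Fin m × Fin n =>
              (0:Fin m → Fin n → F) ij.1 ij.2 ≠ 0
                ∨ (Pi.single j₀ (1:F) : Fin n → F) ij.2 ≠ 0)).card
            = (Finset.univ.filter
              (fun ij : Fin m × Fin n => True ∧ ij.2 = j₀)).card := by
          apply congrArg
          apply Finset.filter_congr
          intro ij _
          simp [Pi.single_apply]
        rw [this, card_prod_filter (fun _ : Fin m => True) (fun j : Fin n => j = j₀),
          Finset.filter_true, Finset.filter_eq' Finset.univ j₀]
        simp
    -- lower bound
    have hlow : ∀ w ∈ T, min (sInf dS) m ≤ w := by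
      rintro w ⟨uv, horth, hnot, hw⟩
      -- step 1: each uv.1 i ∈ C
      have step1 : ∀ i : Fin m, uv.1 i ∈ C := by
        intro i
        apply mem_of_dual_dual
        intro d hd
        apply tnd
        intro α
        have hαd : ∀ y ∈ C, (α • d) ⬝ᵥ y = 0 := by
          intro y hy
          rw [smul_dotProduct, hd y hy, smul_zero]
        have := horth (0, fun l => if l = i then α • d else 0)
          ⟨fun _ => C.zero_mem, by simp, by
            intro l y hy
            by_cases hl : l = i <;> simp [hl, hαd y hy, zero_dotProduct]⟩
        simp only [Pi.zero_apply, dotProduct_zero, Finset.sum_const_zero, sub_zero] at this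
        rw [Finset.sum_eq_single i (fun b _ hb => by rw [if_neg hb, zero_dotProduct])
          (by simp)] at this
        rwa [if_pos rfl, smul_dotProduct, smul_eq_mul] at this
      -- step 2: v_i and v_j agree on C
      have step2 : ∀ i j : Fin m, ∀ y ∈ C, uv.2 i ⬝ᵥ y = uv.2 j ⬝ᵥ y := by
        intro i j y hy
        by_cases hij : i = j
        · rw [hij]
        · apply sub_eq_zero.mp
          rw [← sub_dotProduct]
          apply tnd
          intro α
          set x : Fin n → F := α • y with hx
          have hxC : x ∈ C := C.smul_mem α hy
          set P1 : Fin m → Fin n → F := Pi.single i x with hP1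
          set P2 : Fin m → Fin n → F := Pi.single j (-x) with hP2
          set cc : Fin m → Fin n → F := fun l => P1 l + P2 l with hcc
          have hcd1 : ∀ l : Fin m, cc l ∈ C := by
            intro l
            apply C.add_mem
            · by_cases hl : l = i
              · subst hl; rw [hP1, Pi.single_eq_same]; exact hxC
              · rw [hP1, Pi.single_eq_of_ne hl]; exact C.zero_mem
            · by_cases hl : l = j
              · subst hl; rw [hP2, Pi.single_eq_same]; exact C.neg_mem hxC
              · rw [hP2, Pi.single_eq_of_ne hl]; exact C.zero_mem
          have hcd2 : ∑ l : Fin m, cc l = 0 := by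
            rw [hcc]
            rw [Finset.sum_add_distrib, hP1, hP2, Finset.sum_pi_single', Finset.sum_pi_single']
            simp
          have := horth (cc, 0)
            ⟨hcd1, hcd2, fun l z hz => by simp⟩
          simp only [Pi.zero_apply, zero_dotProduct, Finset.sum_const_zero, zero_sub,
            map_neg, neg_eq_zero] at this
          have hsum : ∑ l : Fin m, uv.2 l ⬝ᵥ cc l = uv.2 i ⬝ᵥ x - uv.2 j ⬝ᵥ x := by
            have e1 : ∑ l : Fin m, uv.2 l ⬝ᵥ P1 l = uv.2 i ⬝ᵥ x := by
              rw [Finset.sum_eq_single i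
                (fun b _ hb => by rw [hP1, Pi.single_eq_of_ne hb, dotProduct_zero]) (by simp)]
              rw [hP1, Pi.single_eq_same]
            have e2 : ∑ l : Fin m, uv.2 l ⬝ᵥ P2 l = -(uv.2 j ⬝ᵥ x) := by
              rw [Finset.sum_eq_single j
                (fun b _ hb => by rw [hP2, Pi.single_eq_of_ne hb, dotProduct_zero]) (by simp)]
              rw [hP2, Pi.single_eq_same, dotProduct_neg]
            simp only [hcc, dotProduct_add]
            rw [Finset.sum_add_distrib, e1, e2]
            ring
          rw [hsum, ← sub_dotProduct, hx, dotProduct_smul, smul_eq_mul] at this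
          exact this
      by_cases hsum : ∑ i : Fin m, uv.1 i = 0
      · -- then some v_i fails orthogonality to C
        have : ∃ i₀ : Fin m, ∃ y ∈ C, uv.2 i₀ ⬝ᵥ y ≠ 0 := by
          by_contra hv
          push_neg at hv
          exact hnot ⟨step1, hsum, hv⟩
        obtain ⟨i₀, y, hyC, hy0⟩ := this
        have hvne : ∀ i : Fin m, ∃ j : Fin n, uv.2 i j ≠ 0 := by
          intro i
          by_contra hj
          push_neg at hj
          have : uv.2 i = 0 := funext hj
          have h2 := step2 i i₀ y hyC
          rw [this, zero_dotProduct] at h2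
          exact hy0 h2.symm
        choose jf hjf using hvne
        have hcard : (Finset.univ : Finset (Fin m)).card
            ≤ (Finset.univ.filter
              (fun ij : Fin m × Fin n => uv.1 ij.1 ij.2 ≠ 0 ∨ uv.2 ij.1 ij.2 ≠ 0)).card := by
          apply Finset.card_le_card_of_injOn (fun i => (i, jf i))
          · intro i _
            simp only [Finset.mem_coe, Finset.mem_filter, Finset.mem_univ, true_and]
            exact Or.inr (hjf i)
          · intro a _ b _ hab
            exact congrArg Prod.fst hab
        have : m ≤ w := by
          rw [hw]
          simpa using hcard
        exact le_trans (min_le_right _ _) this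
      · -- Σ u_i ∈ C, nonzero
        have hsC : ∑ i : Fin m, uv.1 i ∈ C := C.sum_mem (fun i _ => step1 i)
        have hdle : sInf dS ≤ hammingNorm (∑ i : Fin m, uv.1 i) :=
          Nat.sInf_le ⟨∑ i : Fin m, uv.1 i, hsC, hsum, rfl⟩
        have hwge : hammingNorm (∑ i : Fin m, uv.1 i) ≤ w := by
          rw [hw, hammingNorm]
          have hex : ∀ j : Fin n, (∑ i : Fin m, uv.1 i) j ≠ 0 → ∃ i : Fin m, uv.1 i j ≠ 0 := by
            intro j hj
            by_contra hi
            push_neg at hi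
            apply hj
            rw [Finset.sum_apply]
            exact Finset.sum_eq_zero (fun i _ => hi i)
          classical
          choose! fi hfi using hex
          apply Finset.card_le_card_of_injOn (fun j => (fi j, j))
          · intro j hj
            simp only [Finset.mem_coe, Finset.mem_filter, Finset.mem_univ, true_and] at hj ⊢
            exact Or.inl (hfi j hj)
          · intro a _ b _ hab
            exact congrArg Prod.snd hab
        exact le_trans (min_le_left _ _) (le_trans hdle hwge)
    -- conclude
    apply le_antisymm
    · rcases le_total (sInf dS) m with h | h
      · rw [min_eq_left h]; exact Nat.sInf_le hdCT
      · rw [min_eq_right h]; exact Nat.sInf_le hmT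
    · exact le_csInf ⟨_, hdCT⟩ hlow
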